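/- Let G be a finite graph with a percolation measure, A and B sets of vertices, and f, g two increasing functions on configurations that are both determined by the cluster of A. Then E(f·g | A↮B) ≥ E(f | A↮B)·E(g | A↮B). If instead f is determined by the cluster of A and g by the cluster of B (both increasing), then E(f·g | A↮B) ≤ E(f | A↮B)·E(g | A↮B). -/

import Mathlib

open scoped BigOperators

structure PercGraph (V E : Type) where
  ends : E → V × V
  p : E → ℝ

namespace PercGraph

variable {V E : Type} [DecidableEq V] [Fintype E] [DecidableEq E]

/-- Weight of a configuration: each edge `e` is open (`ω e = true`) with probability `p e`. -/
def weight (G : PercGraph V E) (ω : E → Bool) : ℝ :=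
  ∏ e, if ω e then G.p e else 1 - G.p e

/-- Probability of an event under the percolation measure. -/
noncomputable def prob (G : PercGraph V E) (S : Set (E → Bool)) : ℝ :=
  ∑ ω : E → Bool, Set.indicator S G.weight ω

/-- Expectation of a function under the percolation measure. -/
noncomputable def expec (G : PercGraph V E) (f : (E → Bool) → ℝ) : ℝ :=
  ∑ ω : E → Bool, f ω * G.weight ω

/-- Two vertices are adjacent via an open edge in configuration `ω`. -/
def adj (G : PercGraph V E) (ω : E → Bool) (x y : V) : Prop :=
  ∃ e, ω e = true ∧ (G.ends e = (x, y) ∨ G.ends e = (y, x))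

/-- `x` and `y` are connected by a path of open edges. -/
def Conn (G : PercGraph V E) (ω : E → Bool) (x y : V) : Prop :=
  Relation.ReflTransGen (G.adj ω) x y

/-- The union of the open clusters of the vertices of `A`. -/
def cluster (G : PercGraph V E) (ω : E → Bool) (A : Set V) : Set V :=
  {y | ∃ a ∈ A, G.Conn ω a y}

/-- The event `x ↔ y`. -/
def connEvent (G : PercGraph V E) (x y : V) : Set (E → Bool) :=
  {ω | G.Conn ω x y}

/-- The event `x ↔ A`. -/
def connTo (G : PercGraph V E) (x : V) (A : Set V) : Set (E → Bool) :=
  {ω | ∃ a ∈ A, G.Conn ω x a}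

/-- The event `A ↮ B`. -/
def disconn (G : PercGraph V E) (A B : Set V) : Set (E → Bool) :=
  {ω | ∀ a ∈ A, ∀ b ∈ B, ¬ G.Conn ω a b}

def IncreasingEvent (S : Set (E → Bool)) : Prop :=
  ∀ ⦃ω ω' : E → Bool⦄, (∀ e, ω e = true → ω' e = true) → ω ∈ S → ω' ∈ S

def DecreasingEvent (S : Set (E → Bool)) : Prop :=
  ∀ ⦃ω ω' : E → Bool⦄, (∀ e, ω e = true → ω' e = true) → ω' ∈ S → ω ∈ S

def IncreasingFun (f : (E → Bool) → ℝ) : Prop :=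
  ∀ ⦃ω ω' : E → Bool⦄, (∀ e, ω e = true → ω' e = true) → f ω ≤ f ω'

/-- `f` is determined by the cluster of `A`. -/
def ClusterDetermined (G : PercGraph V E) (A : Set V) (f : (E → Bool) → ℝ) : Prop :=
  ∀ ω ω', G.cluster ω A = G.cluster ω' A → f ω = f ω'

/-- The event `S` is determined by the cluster of `A`. -/
def ClusterDeterminedEvent (G : PercGraph V E) (A : Set V) (S : Set (E → Bool)) : Prop :=
  ∀ ω ω', G.cluster ω A = G.cluster ω' A → (ω ∈ S ↔ ω' ∈ S)

noncomputable def condProb (G : PercGraph V E) (S T : Set (E → Bool)) : ℝ :=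
  G.prob (S ∩ T) / G.prob T

noncomputable def condExpec (G : PercGraph V E) (f : (E → Bool) → ℝ) (T : Set (E → Bool)) : ℝ :=
  G.expec (T.indicator f) / G.prob T

/-- The edge `e` is incident to the vertex `x`. -/
def incident (G : PercGraph V E) (x : V) (e : E) : Prop :=
  (G.ends e).1 = x ∨ (G.ends e).2 = x

/-- The other endpoint of an edge incident to `x`. -/
def otherEnd (G : PercGraph V E) (x : V) (e : E) : V :=
  if (G.ends e).1 = x then (G.ends e).2 else (G.ends e).1

/-- The graph `G ∖ W`: delete the vertices of `W` and all incident edges. -/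
def delete (G : PercGraph V E) (W : Finset V) :
    PercGraph V {e : E // (G.ends e).1 ∉ W ∧ (G.ends e).2 ∉ W} :=
  ⟨fun e => G.ends e.1, fun e => G.p e.1⟩

/-- The graph `G` with the probability of edge `e` replaced by `q`. -/
def withEdgeProb (G : PercGraph V E) (e : E) (q : ℝ) : PercGraph V E :=
  ⟨G.ends, Function.update G.p e q⟩

/-- Contraction of the edge `e`: set its probability to 1. -/
def contract (G : PercGraph V E) (e : E) : PercGraph V E :=
  G.withEdgeProb e 1

/-- The event that `e` is pivotal for `U`. -/
def pivotal (e : E) (U : Set (E → Bool)) : Set (E → Bool) :=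
  {ω | ¬ ((Function.update ω e true ∈ U) ↔ (Function.update ω e false ∈ U))}

/-- All edge probabilities lie in `[0,1]`. -/
def ProbValid (G : PercGraph V E) : Prop := ∀ e, 0 ≤ G.p e ∧ G.p e ≤ 1

end PercGraph
namespace PercGraph

set_option linter.unusedSectionVars false

variable {V E : Type} [DecidableEq V] [Fintype E] [DecidableEq E]

lemma conn_mono (G : PercGraph V E) {ω τ : E → Bool} (h : ∀ e, ω e = true → τ e = true)
    {a v : V} (hc : G.Conn ω a v) : G.Conn τ a v :=
  Relation.ReflTransGen.mono (r := G.adj ω) (p := G.adj τ) (fun _ _ hadj => by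
    obtain ⟨e, he, hd⟩ := hadj; exact ⟨e, h e he, hd⟩) _ _ hc

lemma weight_nonneg (G : PercGraph V E) (hp : G.ProbValid) (ω : E → Bool) : 0 ≤ G.weight ω := by
  apply Finset.prod_nonneg
  intro e _
  by_cases hb : ω e = true <;> simp [hb] <;> linarith [(hp e).1, (hp e).2]

lemma prob_nonneg (G : PercGraph V E) (hp : G.ProbValid) (S : Set (E → Bool)) :
    0 ≤ G.prob S :=
  Finset.sum_nonneg fun ω _ => Set.indicator_nonneg (fun ω _ => G.weight_nonneg hp ω) ω

def dropEdge (G : PercGraph V E) (e : E) : PercGraph V {e' : E // e' ≠ e} :=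
  ⟨fun e' => G.ends e'.1, fun e' => G.p e'.1⟩

def extCfg (e : E) (bb : Bool) (ω' : {e' : E // e' ≠ e} → Bool) : E → Bool :=
  fun e'' => if h : e'' = e then bb else ω' ⟨e'', h⟩

@[simp] lemma extCfg_self (e : E) (bb : Bool) (ω' : {e' : E // e' ≠ e} → Bool) :
    extCfg e bb ω' e = bb := dif_pos rfl

lemma extCfg_ne (e : E) (bb : Bool) (ω' : {e' : E // e' ≠ e} → Bool) {e'' : E} (h : e'' ≠ e) :
    extCfg e bb ω' e'' = ω' ⟨e'', h⟩ := dif_neg h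

lemma weight_extCfg (G : PercGraph V E) (e : E) (bb : Bool) (ω' : {e' : E // e' ≠ e} → Bool) :
    G.weight (extCfg e bb ω') = (if bb then G.p e else 1 - G.p e) * (G.dropEdge e).weight ω' := by
  unfold weight
  rw [← Finset.mul_prod_erase Finset.univ _ (Finset.mem_univ e)]
  congr 1
  · simp
  · rw [Finset.prod_subtype (Finset.univ.erase e) (p := fun e' => e' ≠ e) (by simp)]
    apply Finset.prod_congr rfl
    intro e' _
    rw [extCfg_ne e bb ω' e'.2]
    rfl

def edgeSplitEquiv (e : E) : Bool × ({e' : E // e' ≠ e} → Bool) ≃ (E → Bool) where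
  toFun pr := extCfg e pr.1 pr.2
  invFun ω := (ω e, fun e' => ω e'.1)
  left_inv := by
    rintro ⟨bb, ω'⟩
    refine Prod.ext (by simp) ?_
    funext e'
    simp [extCfg_ne e bb ω' e'.2]
  right_inv := by
    intro ω; funext e''
    by_cases h : e'' = e
    · subst h; simp
    · simp [extCfg_ne _ _ _ h]

lemma sum_split (e : E) (F : (E → Bool) → ℝ) :
    ∑ ω : E → Bool, F ω
      = (∑ ω' : ({e' : E // e' ≠ e} → Bool), F (extCfg e true ω'))
        + ∑ ω' : ({e' : E // e' ≠ e} → Bool), F (extCfg e false ω') := by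
  rw [← Fintype.sum_equiv (edgeSplitEquiv e) (fun pr => F (extCfg e pr.1 pr.2)) F
      (fun pr => rfl), Fintype.sum_prod_type, Fintype.sum_bool]

end PercGraph
namespace PercGraph

set_option linter.unusedSectionVars false

variable {V E : Type} [DecidableEq V] [Fintype E] [DecidableEq E]

section Transfer

variable (G : PercGraph V E) (e : E)

lemma adj_ext_false {ω' : {e' : E // e' ≠ e} → Bool} {v w : V} :
    G.adj (extCfg e false ω') v w ↔ (G.dropEdge e).adj ω' v w := by
  constructor
  · rintro ⟨e'', he'', hd⟩
    rcases eq_or_ne e'' e with rfl | h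
    · simp at he''
    · exact ⟨⟨e'', h⟩, by rwa [extCfg_ne _ _ _ h] at he'', hd⟩
  · rintro ⟨e'', he'', hd⟩
    exact ⟨e''.1, by rwa [extCfg_ne _ _ _ e''.2], hd⟩

lemma adj_ext_true {ω' : {e' : E // e' ≠ e} → Bool} {v w : V} :
    G.adj (extCfg e true ω') v w ↔
      (G.dropEdge e).adj ω' v w ∨ (G.ends e = (v, w) ∨ G.ends e = (w, v)) := by
  constructor
  · rintro ⟨e'', he'', hd⟩
    rcases eq_or_ne e'' e with rfl | h
    · exact Or.inr hd
    · exact Or.inl ⟨⟨e'', h⟩, by rwa [extCfg_ne _ _ _ h] at he'', hd⟩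
  · rintro (⟨e'', he'', hd⟩ | hd)
    · exact ⟨e''.1, by rwa [extCfg_ne _ _ _ e''.2], hd⟩
    · exact ⟨e, by simp, hd⟩

lemma conn_ext_false {ω' : {e' : E // e' ≠ e} → Bool} {a v : V} :
    G.Conn (extCfg e false ω') a v ↔ (G.dropEdge e).Conn ω' a v :=
  ⟨Relation.ReflTransGen.mono (r := G.adj (extCfg e false ω')) (p := (G.dropEdge e).adj ω')
     (fun _ _ h => (G.adj_ext_false e).1 h) _ _,
   Relation.ReflTransGen.mono (r := (G.dropEdge e).adj ω') (p := G.adj (extCfg e false ω'))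
     (fun _ _ h => (G.adj_ext_false e).2 h) _ _⟩

lemma conn_ext_lift {ω' : {e' : E // e' ≠ e} → Bool} (bb : Bool) {a v : V}
    (h : (G.dropEdge e).Conn ω' a v) : G.Conn (extCfg e bb ω') a v :=
  Relation.ReflTransGen.mono (r := (G.dropEdge e).adj ω') (p := G.adj (extCfg e bb ω'))
    (fun _ _ hadj => by
    obtain ⟨e'', he'', hd⟩ := hadj
    exact ⟨e''.1, by rwa [extCfg_ne _ _ _ e''.2], hd⟩) _ _ h

lemma mem_disconn_ext_false {ω' : {e' : E // e' ≠ e} → Bool} :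
    extCfg e false ω' ∈ G.disconn A B ↔ ω' ∈ (G.dropEdge e).disconn A B := by
  constructor <;> intro h a ha c hc hcon
  · exact h a ha c hc ((G.conn_ext_false e).2 hcon)
  · exact h a ha c hc ((G.conn_ext_false e).1 hcon)


lemma cluster_ext_false (S : Set V) (ω' : {e' : E // e' ≠ e} → Bool) :
    G.cluster (extCfg e false ω') S = (G.dropEdge e).cluster ω' S := by
  ext v
  constructor <;> rintro ⟨a, ha, hc⟩
  · exact ⟨a, ha, (G.conn_ext_false e).1 hc⟩
  · exact ⟨a, ha, (G.conn_ext_false e).2 hc⟩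


variable {b x : V} (hbx : G.ends e = (b, x) ∨ G.ends e = (x, b))

include hbx

lemma ends_cases {v w : V} (hd : G.ends e = (v, w) ∨ G.ends e = (w, v)) :
    (v = b ∧ w = x) ∨ (v = x ∧ w = b) := by
  rcases hbx with h | h <;> rcases hd with h' | h' <;>
    (rw [h] at h'; simp only [Prod.mk.injEq] at h') <;>
    obtain ⟨rfl, rfl⟩ := h' <;> tauto

variable {A B : Set V} (hb : b ∈ B)

include hb

lemma conn_ext_true_of_disconn {ω' : {e' : E // e' ≠ e} → Bool} {a v : V} (ha : a ∈ A)
    (hD : ω' ∈ (G.dropEdge e).disconn A (B ∪ {x}))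
    (hc : G.Conn (extCfg e true ω') a v) : (G.dropEdge e).Conn ω' a v := by
  induction hc with
  | refl => exact Relation.ReflTransGen.refl
  | tail hcon hadj ih =>
    rcases (G.adj_ext_true e).1 hadj with h | hd
    · exact ih.tail h
    · rcases G.ends_cases e hbx hd with ⟨rfl, _⟩ | ⟨rfl, _⟩
      · exact absurd ih (hD _ ha _ (Set.mem_union_left _ hb))
      · exact absurd ih (hD _ ha _ (Set.mem_union_right _ rfl))

lemma mem_disconn_ext_true {ω' : {e' : E // e' ≠ e} → Bool} :
    extCfg e true ω' ∈ G.disconn A B ↔ ω' ∈ (G.dropEdge e).disconn A (B ∪ {x}) := by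
  constructor
  · intro hω a ha c hc hcon
    have hcon' : G.Conn (extCfg e true ω') a c := G.conn_ext_lift e true hcon
    rcases hc with hc | hc
    · exact hω a ha c hc hcon'
    · rcases hc with rfl
      refine hω a ha b hb (hcon'.tail ?_)
      exact ⟨e, by simp, by tauto⟩
  · intro hD a ha c hc hcon
    exact hD a ha c (Set.mem_union_left _ hc)
      (G.conn_ext_true_of_disconn e hbx hb ha hD hcon)

lemma cluster_ext_true_of_disconn {ω' : {e' : E // e' ≠ e} → Bool}
    (hD : ω' ∈ (G.dropEdge e).disconn A (B ∪ {x})) :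
    G.cluster (extCfg e true ω') A = (G.dropEdge e).cluster ω' A := by
  ext v
  constructor <;> rintro ⟨a, ha, hc⟩
  · exact ⟨a, ha, G.conn_ext_true_of_disconn e hbx hb ha hD hc⟩
  · exact ⟨a, ha, G.conn_ext_lift e true hc⟩

lemma conn_ext_true_to_union {ω' : {e' : E // e' ≠ e} → Bool} {c v : V} (hc : c ∈ B ∪ {x})
    (hcon : G.Conn (extCfg e true ω') c v) :
    ∃ c' ∈ B ∪ {x}, (G.dropEdge e).Conn ω' c' v := by
  induction hcon with
  | refl => exact ⟨c, hc, Relation.ReflTransGen.refl⟩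
  | tail hcon hadj ih =>
    obtain ⟨c', hc', hcc⟩ := ih
    rcases (G.adj_ext_true e).1 hadj with h | hd
    · exact ⟨c', hc', hcc.tail h⟩
    · rcases G.ends_cases e hbx hd with ⟨_, h⟩ | ⟨_, h⟩ <;>
        refine ⟨_, ?_, Relation.ReflTransGen.refl⟩ <;> rw [h]
      · exact Set.mem_union_right _ rfl
      · exact Set.mem_union_left _ hb

lemma cluster_ext_true_B (ω' : {e' : E // e' ≠ e} → Bool) :
    G.cluster (extCfg e true ω') B = (G.dropEdge e).cluster ω' (B ∪ {x}) := by
  ext v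
  constructor
  · rintro ⟨c, hc, hcon⟩
    exact G.conn_ext_true_to_union e hbx hb (Set.mem_union_left _ hc) hcon
  · rintro ⟨c, hc, hcon⟩
    rcases hc with hc | hc
    · exact ⟨c, hc, G.conn_ext_lift e true hcon⟩
    · rcases hc with rfl
      refine ⟨b, hb, Relation.ReflTransGen.head ⟨e, by simp, by tauto⟩
        (G.conn_ext_lift e true hcon)⟩

end Transfer

lemma mem_disconn_union (G : PercGraph V E) (A B : Set V) (x : V) (ω : E → Bool) :
    ω ∈ G.disconn A (B ∪ {x}) ↔ ω ∈ G.disconn A B ∧ x ∉ G.cluster ω A := by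
  constructor
  · intro h
    exact ⟨fun a ha c hc => h a ha c (Set.mem_union_left _ hc),
      fun hx => by obtain ⟨a, ha, hc⟩ := hx; exact h a ha x (Set.mem_union_right _ rfl) hc⟩
  · rintro ⟨h1, h2⟩ a ha c hc
    rcases hc with hc | hc
    · exact h1 a ha c hc
    · rcases hc with rfl
      exact fun hcon => h2 ⟨a, ha, hcon⟩

end PercGraph
namespace PercGraph

set_option linter.unusedSectionVars false

open scoped Classical

variable {V E : Type} [DecidableEq V] [Fintype E] [DecidableEq E]

lemma expec_ind (G : PercGraph V E) (S : Set (E → Bool)) (φ : (E → Bool) → ℝ) :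
    G.expec (S.indicator φ) = ∑ ω : E → Bool, S.indicator (fun ω => φ ω * G.weight ω) ω := by
  unfold expec
  apply Finset.sum_congr rfl
  intro ω _
  by_cases h : ω ∈ S
  · rw [Set.indicator_of_mem h, Set.indicator_of_mem h]
  · rw [Set.indicator_of_notMem h, Set.indicator_of_notMem h, zero_mul]

lemma prob_ind (G : PercGraph V E) (S : Set (E → Bool)) :
    G.prob S = ∑ ω : E → Bool, S.indicator (fun ω => (1 : ℝ) * G.weight ω) ω := by
  unfold prob
  apply Finset.sum_congr rfl
  intro ω _
  by_cases h : ω ∈ S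
  · rw [Set.indicator_of_mem h, Set.indicator_of_mem h, one_mul]
  · rw [Set.indicator_of_notMem h, Set.indicator_of_notMem h]

lemma sum_ind_split (G : PercGraph V E) (e : E) (S : Set (E → Bool))
    (St Sf : Set ({e' : E // e' ≠ e} → Bool)) (φ : (E → Bool) → ℝ)
    (ψt ψf : ({e' : E // e' ≠ e} → Bool) → ℝ)
    (hmt : ∀ ω', extCfg e true ω' ∈ S ↔ ω' ∈ St)
    (hmf : ∀ ω', extCfg e false ω' ∈ S ↔ ω' ∈ Sf)
    (hvt : ∀ ω' ∈ St, φ (extCfg e true ω') = ψt ω')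
    (hvf : ∀ ω' ∈ Sf, φ (extCfg e false ω') = ψf ω') :
    ∑ ω : E → Bool, S.indicator (fun ω => φ ω * G.weight ω) ω
      = G.p e * (∑ ω', St.indicator (fun ω' => ψt ω' * (G.dropEdge e).weight ω') ω')
        + (1 - G.p e) * (∑ ω', Sf.indicator (fun ω' => ψf ω' * (G.dropEdge e).weight ω') ω') := by
  rw [sum_split e, Finset.mul_sum, Finset.mul_sum]
  congr 1
  · apply Finset.sum_congr rfl
    intro ω' _
    by_cases h : ω' ∈ St
    · rw [Set.indicator_of_mem ((hmt ω').2 h), Set.indicator_of_mem h, hvt ω' h,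
        weight_extCfg]
      simp only [if_true]
      ring
    · rw [Set.indicator_of_notMem (fun hh => h ((hmt ω').1 hh)),
        Set.indicator_of_notMem h, mul_zero]
  · apply Finset.sum_congr rfl
    intro ω' _
    by_cases h : ω' ∈ Sf
    · rw [Set.indicator_of_mem ((hmf ω').2 h), Set.indicator_of_mem h, hvf ω' h,
        weight_extCfg]
      simp only [Bool.false_eq_true, if_false]
      ring
    · rw [Set.indicator_of_notMem (fun hh => h ((hmf ω').1 hh)),
        Set.indicator_of_notMem h, mul_zero]

lemma prob_eq_expec_one (G : PercGraph V E) (S : Set (E → Bool)) :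
    G.prob S = G.expec (S.indicator fun _ => (1 : ℝ)) := by
  unfold prob expec
  apply Finset.sum_congr rfl
  intro ω _
  by_cases h : ω ∈ S
  · rw [Set.indicator_of_mem h, Set.indicator_of_mem h, one_mul]
  · rw [Set.indicator_of_notMem h, Set.indicator_of_notMem h, zero_mul]

lemma ind_mul_h (G : PercGraph V E) (A B : Set V) (x : V) (φ : (E → Bool) → ℝ) :
    G.expec ((G.disconn A B).indicator fun ω =>
        φ ω * (if x ∈ G.cluster ω A then (1 : ℝ) else 0))
      = G.expec ((G.disconn A B).indicator φ)
        - G.expec ((G.disconn A (B ∪ {x})).indicator φ) := by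
  unfold expec
  rw [← Finset.sum_sub_distrib]
  apply Finset.sum_congr rfl
  intro ω _
  by_cases h0 : ω ∈ G.disconn A B
  · by_cases hx : x ∈ G.cluster ω A
    · have h1 : ω ∉ G.disconn A (B ∪ {x}) := fun hh =>
        ((G.mem_disconn_union A B x ω).1 hh).2 hx
      rw [Set.indicator_of_mem h0, Set.indicator_of_mem h0, Set.indicator_of_notMem h1,
        if_pos hx]
      ring
    · have h1 : ω ∈ G.disconn A (B ∪ {x}) := (G.mem_disconn_union A B x ω).2 ⟨h0, hx⟩
      rw [Set.indicator_of_mem h0, Set.indicator_of_mem h0, Set.indicator_of_mem h1,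
        if_neg hx]
      ring
  · have h1 : ω ∉ G.disconn A (B ∪ {x}) := fun hh =>
      h0 ((G.mem_disconn_union A B x ω).1 hh).1
    rw [Set.indicator_of_notMem h0, Set.indicator_of_notMem h0,
      Set.indicator_of_notMem h1]
    ring

lemma prob_zero_expec (G : PercGraph V E) (hp : G.ProbValid) (S : Set (E → Bool))
    (hS : G.prob S = 0) (φ : (E → Bool) → ℝ) : G.expec (S.indicator φ) = 0 := by
  have hw : ∀ ω ∈ (Finset.univ : Finset (E → Bool)), S.indicator G.weight ω = 0 := by
    rw [← Finset.sum_eq_zero_iff_of_nonneg]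
    · exact hS
    · intro ω _
      exact Set.indicator_nonneg (fun ω _ => G.weight_nonneg hp ω) ω
  unfold expec
  apply Finset.sum_eq_zero
  intro ω _
  by_cases h : ω ∈ S
  · have := hw ω (Finset.mem_univ ω)
    rw [Set.indicator_of_mem h] at this
    rw [Set.indicator_of_mem h, this, mul_zero]
  · rw [Set.indicator_of_notMem h, zero_mul]

lemma cross_ge {X1 X0 F1 F0 G1 G0 P1 P0 : ℝ} (hP0 : 0 ≤ P0) (hP1 : 0 ≤ P1)
    (h1 : F1 * G1 ≤ X1 * P1) (h0 : F0 * G0 ≤ X0 * P0)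
    (hFG : 0 ≤ (F1 * P0 - F0 * P1) * (G1 * P0 - G0 * P1))
    (hz1 : P1 = 0 → X1 = 0 ∧ F1 = 0 ∧ G1 = 0)
    (hz0 : P0 = 0 → X0 = 0 ∧ F0 = 0 ∧ G0 = 0) :
    F1 * G0 + F0 * G1 ≤ X1 * P0 + X0 * P1 := by
  rcases hP1.eq_or_lt with h | hP1'
  · obtain ⟨e1, e2, e3⟩ := hz1 h.symm
    simp [e1, e2, e3, ← h]
  · rcases hP0.eq_or_lt with h | hP0'
    · obtain ⟨e1, e2, e3⟩ := hz0 h.symm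
      simp [e1, e2, e3, ← h]
    · have key : (F1 * G0 + F0 * G1) * (P0 * P1) ≤ (X1 * P0 + X0 * P1) * (P0 * P1) := by
        nlinarith [mul_le_mul_of_nonneg_right h1 (mul_nonneg hP0 hP0),
          mul_le_mul_of_nonneg_right h0 (mul_nonneg hP1 hP1), hFG]
      exact le_of_mul_le_mul_right key (by positivity)

lemma cross_le {X1 X0 F1 F0 G1 G0 P1 P0 : ℝ} (hP0 : 0 ≤ P0) (hP1 : 0 ≤ P1)
    (h1 : X1 * P1 ≤ F1 * G1) (h0 : X0 * P0 ≤ F0 * G0)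
    (hFG : (F1 * P0 - F0 * P1) * (G1 * P0 - G0 * P1) ≤ 0)
    (hz1 : P1 = 0 → X1 = 0 ∧ F1 = 0 ∧ G1 = 0)
    (hz0 : P0 = 0 → X0 = 0 ∧ F0 = 0 ∧ G0 = 0) :
    X1 * P0 + X0 * P1 ≤ F1 * G0 + F0 * G1 := by
  rcases hP1.eq_or_lt with h | hP1'
  · obtain ⟨e1, e2, e3⟩ := hz1 h.symm
    simp [e1, e2, e3, ← h]
  · rcases hP0.eq_or_lt with h | hP0'
    · obtain ⟨e1, e2, e3⟩ := hz0 h.symm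
      simp [e1, e2, e3, ← h]
    · have key : (X1 * P0 + X0 * P1) * (P0 * P1) ≤ (F1 * G0 + F0 * G1) * (P0 * P1) := by
        nlinarith [mul_le_mul_of_nonneg_right h1 (mul_nonneg hP0 hP0),
          mul_le_mul_of_nonneg_right h0 (mul_nonneg hP1 hP1), hFG]
      exact le_of_mul_le_mul_right key (by positivity)

end PercGraph
namespace PercGraph

set_option linter.unusedSectionVars false
set_option maxHeartbeats 1000000

open scoped Classical

lemma harris : ∀ (n : ℕ), ∀ (E : Type) [Fintype E] [DecidableEq E],
    Fintype.card E = n → ∀ (V : Type) [DecidableEq V] (G : PercGraph V E),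
    G.ProbValid → ∀ f g : (E → Bool) → ℝ, IncreasingFun f → IncreasingFun g →
    (∑ ω : E → Bool, f ω * G.weight ω) * (∑ ω : E → Bool, g ω * G.weight ω) ≤
      (∑ ω : E → Bool, f ω * g ω * G.weight ω) * (∑ ω : E → Bool, G.weight ω) := by
  intro n
  induction n using Nat.strong_induction_on with
  | _ n IH =>
  intro E _ _ hcard V _ G hp f g hf hg
  rcases isEmpty_or_nonempty E with hE | hE
  · have h1 : ∀ (φ : (E → Bool) → ℝ), (∑ ω : E → Bool, φ ω) = φ (fun _ => false) := by
      intro φ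
      apply Finset.sum_eq_single_of_mem _ (Finset.mem_univ _)
      intro ω _ hne
      exact absurd (funext fun e0 => hE.elim e0) hne
    rw [h1, h1, h1, h1]
    have hw : G.weight (fun _ => false) = 1 := by
      unfold weight; rw [Finset.univ_eq_empty, Finset.prod_empty]
    rw [hw]
    exact le_of_eq (by ring)
  · obtain ⟨e⟩ := hE
    have hn : 1 ≤ n := by rw [← hcard]; exact Fintype.card_pos_iff.mpr ⟨e⟩
    have hcard' : Fintype.card {e' : E // e' ≠ e} = n - 1 := by
      have h2 := Fintype.card_subtype_compl (fun x : E => x = e)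
      rw [Fintype.card_subtype_eq] at h2
      rw [← hcard]; exact h2
    have hlt : n - 1 < n := by omega
    have hp' : (G.dropEdge e).ProbValid := fun e' => hp e'.1
    have hext : ∀ (b1 b2 : Bool), (b1 = true → b2 = true) →
        ∀ (ω₁ ω₂ : {e' : E // e' ≠ e} → Bool), (∀ e', ω₁ e' = true → ω₂ e' = true) →
        ∀ e'', extCfg e b1 ω₁ e'' = true → extCfg e b2 ω₂ e'' = true := by
      intro b1 b2 hbb ω₁ ω₂ h12 e'' h
      by_cases he : e'' = e
      · subst he; rw [extCfg_self] at h ⊢; exact hbb h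
      · rw [extCfg_ne _ _ _ he] at h ⊢; exact h12 _ h
    have hsplitw : ∀ (φ : (E → Bool) → ℝ), (∑ ω : E → Bool, φ ω * G.weight ω)
        = G.p e * (∑ ω', φ (extCfg e true ω') * (G.dropEdge e).weight ω')
          + (1 - G.p e) * (∑ ω', φ (extCfg e false ω') * (G.dropEdge e).weight ω') := by
      intro φ
      rw [sum_split e (fun ω => φ ω * G.weight ω), Finset.mul_sum, Finset.mul_sum]
      congr 1 <;> apply Finset.sum_congr rfl <;> intro ω' _ <;> rw [weight_extCfg] <;>
        simp only [if_true, Bool.false_eq_true, if_false] <;> ring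
    have hW : (∑ ω : E → Bool, G.weight ω)
        = G.p e * (∑ ω', (G.dropEdge e).weight ω')
          + (1 - G.p e) * (∑ ω', (G.dropEdge e).weight ω') := by
      have h3 := hsplitw (fun _ => (1 : ℝ))
      simp only [one_mul] at h3
      exact h3
    have hWnn : 0 ≤ ∑ ω', (G.dropEdge e).weight ω' :=
      Finset.sum_nonneg fun ω' _ => (G.dropEdge e).weight_nonneg hp' ω'
    have hWzero : (∑ ω', (G.dropEdge e).weight ω') = 0 →
        ∀ (φ : ({e' : E // e' ≠ e} → Bool) → ℝ),
          (∑ ω', φ ω' * (G.dropEdge e).weight ω') = 0 := by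
      intro h0 φ
      have hw0 : ∀ ω' ∈ (Finset.univ : Finset ({e' : E // e' ≠ e} → Bool)),
          (G.dropEdge e).weight ω' = 0 :=
        (Finset.sum_eq_zero_iff_of_nonneg
          (fun ω' _ => (G.dropEdge e).weight_nonneg hp' ω')).1 h0
      exact Finset.sum_eq_zero fun ω' _ => by rw [hw0 ω' (Finset.mem_univ _), mul_zero]
    have hf1 : IncreasingFun (fun ω' => f (extCfg e true ω')) :=
      fun ω₁ ω₂ h12 => hf (hext true true id ω₁ ω₂ h12)
    have hf0 : IncreasingFun (fun ω' => f (extCfg e false ω')) :=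
      fun ω₁ ω₂ h12 => hf (hext false false id ω₁ ω₂ h12)
    have hg1 : IncreasingFun (fun ω' => g (extCfg e true ω')) :=
      fun ω₁ ω₂ h12 => hg (hext true true id ω₁ ω₂ h12)
    have hg0 : IncreasingFun (fun ω' => g (extCfg e false ω')) :=
      fun ω₁ ω₂ h12 => hg (hext false false id ω₁ ω₂ h12)
    have ih1 := IH (n - 1) hlt _ hcard' V (G.dropEdge e) hp' _ _ hf1 hg1
    have ih0 := IH (n - 1) hlt _ hcard' V (G.dropEdge e) hp' _ _ hf0 hg0
    have hFmono : (∑ ω', f (extCfg e false ω') * (G.dropEdge e).weight ω')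
        ≤ ∑ ω', f (extCfg e true ω') * (G.dropEdge e).weight ω' :=
      Finset.sum_le_sum fun ω' _ => mul_le_mul_of_nonneg_right
        (hf (hext false true (fun _ => rfl) ω' ω' (fun _ h => h)))
        ((G.dropEdge e).weight_nonneg hp' ω')
    have hGmono : (∑ ω', g (extCfg e false ω') * (G.dropEdge e).weight ω')
        ≤ ∑ ω', g (extCfg e true ω') * (G.dropEdge e).weight ω' :=
      Finset.sum_le_sum fun ω' _ => mul_le_mul_of_nonneg_right
        (hg (hext false true (fun _ => rfl) ω' ω' (fun _ h => h)))
        ((G.dropEdge e).weight_nonneg hp' ω')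
    have hzz : (∑ ω', (G.dropEdge e).weight ω') = 0 →
        (∑ ω', f (extCfg e true ω') * g (extCfg e true ω') * (G.dropEdge e).weight ω') = 0 ∧
        (∑ ω', f (extCfg e true ω') * (G.dropEdge e).weight ω') = 0 ∧
        (∑ ω', g (extCfg e true ω') * (G.dropEdge e).weight ω') = 0 :=
      fun h0 => ⟨hWzero h0 _, hWzero h0 _, hWzero h0 _⟩
    have hzz0 : (∑ ω', (G.dropEdge e).weight ω') = 0 →
        (∑ ω', f (extCfg e false ω') * g (extCfg e false ω') * (G.dropEdge e).weight ω') = 0 ∧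
        (∑ ω', f (extCfg e false ω') * (G.dropEdge e).weight ω') = 0 ∧
        (∑ ω', g (extCfg e false ω') * (G.dropEdge e).weight ω') = 0 :=
      fun h0 => ⟨hWzero h0 _, hWzero h0 _, hWzero h0 _⟩
    have hFG : 0 ≤ ((∑ ω', f (extCfg e true ω') * (G.dropEdge e).weight ω')
          * (∑ ω', (G.dropEdge e).weight ω')
        - (∑ ω', f (extCfg e false ω') * (G.dropEdge e).weight ω')
          * (∑ ω', (G.dropEdge e).weight ω'))
        * ((∑ ω', g (extCfg e true ω') * (G.dropEdge e).weight ω')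
          * (∑ ω', (G.dropEdge e).weight ω')
        - (∑ ω', g (extCfg e false ω') * (G.dropEdge e).weight ω')
          * (∑ ω', (G.dropEdge e).weight ω')) := by
      nlinarith [mul_nonneg (mul_nonneg hWnn (sub_nonneg.2 hFmono))
        (mul_nonneg hWnn (sub_nonneg.2 hGmono))]
    have hcross := cross_ge hWnn hWnn ih1 ih0 hFG hzz hzz0
    have h3 := hsplitw (fun ω => f ω * g ω)
    rw [hsplitw f, hsplitw g, h3, hW]
    have hpe0 : 0 ≤ G.p e := (hp e).1
    have hqe0 : 0 ≤ 1 - G.p e := by linarith [(hp e).2]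
    nlinarith [mul_le_mul_of_nonneg_left ih1 (mul_nonneg hpe0 hpe0),
      mul_le_mul_of_nonneg_left ih0 (mul_nonneg hqe0 hqe0),
      mul_le_mul_of_nonneg_left hcross (mul_nonneg hpe0 hqe0)]

end PercGraph
namespace PercGraph

set_option linter.unusedSectionVars false
set_option maxHeartbeats 2000000

open scoped Classical

variable {V E : Type} [DecidableEq V] [Fintype E] [DecidableEq E]

lemma expec_split (G : PercGraph V E) (e : E) (S : Set (E → Bool))
    (St Sf : Set ({e' : E // e' ≠ e} → Bool)) (φ : (E → Bool) → ℝ)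
    (ψt ψf : ({e' : E // e' ≠ e} → Bool) → ℝ)
    (hmt : ∀ ω', extCfg e true ω' ∈ S ↔ ω' ∈ St)
    (hmf : ∀ ω', extCfg e false ω' ∈ S ↔ ω' ∈ Sf)
    (hvt : ∀ ω' ∈ St, φ (extCfg e true ω') = ψt ω')
    (hvf : ∀ ω' ∈ Sf, φ (extCfg e false ω') = ψf ω') :
    G.expec (S.indicator φ)
      = G.p e * (G.dropEdge e).expec (St.indicator ψt)
        + (1 - G.p e) * (G.dropEdge e).expec (Sf.indicator ψf) := by
  rw [G.expec_ind S φ, (G.dropEdge e).expec_ind St ψt, (G.dropEdge e).expec_ind Sf ψf]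
  exact sum_ind_split G e S St Sf φ ψt ψf hmt hmf hvt hvf

lemma prob_split (G : PercGraph V E) (e : E) (S : Set (E → Bool))
    (St Sf : Set ({e' : E // e' ≠ e} → Bool))
    (hmt : ∀ ω', extCfg e true ω' ∈ S ↔ ω' ∈ St)
    (hmf : ∀ ω', extCfg e false ω' ∈ S ↔ ω' ∈ Sf) :
    G.prob S = G.p e * (G.dropEdge e).prob St + (1 - G.p e) * (G.dropEdge e).prob Sf := by
  rw [G.prob_ind S, (G.dropEdge e).prob_ind St, (G.dropEdge e).prob_ind Sf]
  exact sum_ind_split G e S St Sf (fun _ => 1) (fun _ => 1) (fun _ => 1) hmt hmf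
    (fun _ _ => rfl) (fun _ _ => rfl)

end PercGraph
namespace PercGraph

set_option linter.unusedSectionVars false
set_option maxHeartbeats 4000000

open scoped Classical

lemma bhk_main : ∀ (n : ℕ), ∀ (E : Type) [Fintype E] [DecidableEq E],
    Fintype.card E = n → ∀ (V : Type) [DecidableEq V] (G : PercGraph V E),
    G.ProbValid → ∀ (A B : Set V) (f g : (E → Bool) → ℝ),
    IncreasingFun f → IncreasingFun g → G.ClusterDetermined A f →
    ((G.ClusterDetermined A g →
        G.expec ((G.disconn A B).indicator f) * G.expec ((G.disconn A B).indicator g)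
          ≤ G.expec ((G.disconn A B).indicator fun ω => f ω * g ω)
              * G.prob (G.disconn A B)) ∧
     (G.ClusterDetermined B g →
        G.expec ((G.disconn A B).indicator fun ω => f ω * g ω) * G.prob (G.disconn A B)
          ≤ G.expec ((G.disconn A B).indicator f)
              * G.expec ((G.disconn A B).indicator g))) := by
  intro n
  induction n using Nat.strong_induction_on with
  | _ n IH =>
  intro E _ _ hcard V _ G hp A B f g hf hg hfA
  by_cases hBe : ∃ e : E, (G.ends e).1 ∈ B ∨ (G.ends e).2 ∈ B
  · obtain ⟨e, hBe⟩ := hBe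
    obtain ⟨b, x, hbx, hb⟩ : ∃ b x, (G.ends e = (b, x) ∨ G.ends e = (x, b)) ∧ b ∈ B := by
      rcases hBe with h | h
      · exact ⟨(G.ends e).1, (G.ends e).2, Or.inl Prod.mk.eta.symm, h⟩
      · exact ⟨(G.ends e).2, (G.ends e).1, Or.inr Prod.mk.eta.symm, h⟩
    have hn : 1 ≤ n := by rw [← hcard]; exact Fintype.card_pos_iff.mpr ⟨e⟩
    have hcard' : Fintype.card {e' : E // e' ≠ e} = n - 1 := by
      have h2 := Fintype.card_subtype_compl (fun x : E => x = e)
      rw [Fintype.card_subtype_eq] at h2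
      rw [← hcard]; exact h2
    have hlt : n - 1 < n := by omega
    have hp' : (G.dropEdge e).ProbValid := fun e' => hp e'.1
    have hext : ∀ (b1 b2 : Bool), (b1 = true → b2 = true) →
        ∀ (ω₁ ω₂ : {e' : E // e' ≠ e} → Bool), (∀ e', ω₁ e' = true → ω₂ e' = true) →
        ∀ e'', extCfg e b1 ω₁ e'' = true → extCfg e b2 ω₂ e'' = true := by
      intro b1 b2 hbb ω₁ ω₂ h12 e'' h
      by_cases he : e'' = e
      · subst he; rw [extCfg_self] at h ⊢; exact hbb h
      · rw [extCfg_ne _ _ _ he] at h ⊢; exact h12 _ h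
    -- increasingness of the restricted functions
    have hf0inc : IncreasingFun (fun ω' => f (extCfg e false ω')) :=
      fun ω₁ ω₂ h12 => hf (hext false false id ω₁ ω₂ h12)
    have hg0inc : IncreasingFun (fun ω' => g (extCfg e false ω')) :=
      fun ω₁ ω₂ h12 => hg (hext false false id ω₁ ω₂ h12)
    have hg1inc : IncreasingFun (fun ω' => g (extCfg e true ω')) :=
      fun ω₁ ω₂ h12 => hg (hext true true id ω₁ ω₂ h12)
    have hLinc : IncreasingFun (fun ω' =>
        if x ∈ (G.dropEdge e).cluster ω' A then (1 : ℝ) else 0) := by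
      intro ω₁ ω₂ h12
      by_cases h1 : x ∈ (G.dropEdge e).cluster ω₁ A
      · have h2 : x ∈ (G.dropEdge e).cluster ω₂ A := by
          obtain ⟨a, ha, hc⟩ := h1
          exact ⟨a, ha, (G.dropEdge e).conn_mono h12 hc⟩
        simp only [if_pos h1, if_pos h2, le_refl]
      · simp only [if_neg h1]
        split <;> norm_num
    -- cluster determinedness of the restricted functions
    have hclf0 : (G.dropEdge e).ClusterDetermined A (fun ω' => f (extCfg e false ω')) :=
      fun ω₁ ω₂ hcl => hfA _ _
        (by rw [G.cluster_ext_false e A ω₁, G.cluster_ext_false e A ω₂, hcl])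
    have hclhL : (G.dropEdge e).ClusterDetermined A (fun ω' =>
        if x ∈ (G.dropEdge e).cluster ω' A then (1 : ℝ) else 0) :=
      fun ω₁ ω₂ hcl => by simp only [hcl]
    -- value transfer for f on the true branch
    have hvtf : ∀ ω' ∈ (G.dropEdge e).disconn A (B ∪ {x}),
        f (extCfg e true ω') = f (extCfg e false ω') := fun ω' hω' => hfA _ _
      (by rw [G.cluster_ext_true_of_disconn e hbx hb hω', G.cluster_ext_false e A ω'])
    -- membership transfer
    have hmt : ∀ ω' : {e' : E // e' ≠ e} → Bool,
        extCfg e true ω' ∈ G.disconn A B ↔ ω' ∈ (G.dropEdge e).disconn A (B ∪ {x}) :=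
      fun ω' => G.mem_disconn_ext_true e hbx hb
    have hmf : ∀ ω' : {e' : E // e' ≠ e} → Bool,
        extCfg e false ω' ∈ G.disconn A B ↔ ω' ∈ (G.dropEdge e).disconn A B :=
      fun ω' => G.mem_disconn_ext_false e
    -- probability split
    have hEP := G.prob_split e (G.disconn A B) ((G.dropEdge e).disconn A (B ∪ {x}))
      ((G.dropEdge e).disconn A B) hmt hmf
    -- expectation splits for f
    have hEf := G.expec_split e (G.disconn A B) ((G.dropEdge e).disconn A (B ∪ {x}))
      ((G.dropEdge e).disconn A B) f (fun ω' => f (extCfg e false ω'))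
      (fun ω' => f (extCfg e false ω')) hmt hmf hvtf (fun _ _ => rfl)
    -- nonnegativity / degenerate facts
    have hP1nn := (G.dropEdge e).prob_nonneg hp' ((G.dropEdge e).disconn A (B ∪ {x}))
    have hP0nn := (G.dropEdge e).prob_nonneg hp' ((G.dropEdge e).disconn A B)
    have hpe0 : 0 ≤ G.p e := (hp e).1
    have hqe0 : 0 ≤ 1 - G.p e := by linarith [(hp e).2]
    -- the indicator of x ∈ cluster identities
    have Ih : (G.dropEdge e).expec (((G.dropEdge e).disconn A B).indicator fun ω' =>
          if x ∈ (G.dropEdge e).cluster ω' A then (1 : ℝ) else 0)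
        = (G.dropEdge e).prob ((G.dropEdge e).disconn A B)
          - (G.dropEdge e).prob ((G.dropEdge e).disconn A (B ∪ {x})) := by
      have h4 := ind_mul_h (G.dropEdge e) A B x (fun _ => (1 : ℝ))
      simp only [one_mul] at h4
      rw [h4, ← prob_eq_expec_one, ← prob_eq_expec_one]
    -- (‡) for f : F1 * P0 ≤ F0 * P1
    have hFd : (G.dropEdge e).expec (((G.dropEdge e).disconn A (B ∪ {x})).indicator
            fun ω' => f (extCfg e false ω'))
          * (G.dropEdge e).prob ((G.dropEdge e).disconn A B)
        ≤ (G.dropEdge e).expec (((G.dropEdge e).disconn A B).indicator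
            fun ω' => f (extCfg e false ω'))
          * (G.dropEdge e).prob ((G.dropEdge e).disconn A (B ∪ {x})) := by
      have iha := (IH (n - 1) hlt _ hcard' V (G.dropEdge e) hp' A B
        (fun ω' => f (extCfg e false ω'))
        (fun ω' => if x ∈ (G.dropEdge e).cluster ω' A then (1 : ℝ) else 0)
        hf0inc hLinc hclf0).1 hclhL
      have Ifh := ind_mul_h (G.dropEdge e) A B x (fun ω' => f (extCfg e false ω'))
      rw [Ifh, Ih] at iha
      nlinarith [iha]
    constructor
    · -- part (a) : positive association
      intro hgA
      have hclg0 : (G.dropEdge e).ClusterDetermined A (fun ω' => g (extCfg e false ω')) :=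
        fun ω₁ ω₂ hcl => hgA _ _
          (by rw [G.cluster_ext_false e A ω₁, G.cluster_ext_false e A ω₂, hcl])
      have hvtg : ∀ ω' ∈ (G.dropEdge e).disconn A (B ∪ {x}),
          g (extCfg e true ω') = g (extCfg e false ω') := fun ω' hω' => hgA _ _
        (by rw [G.cluster_ext_true_of_disconn e hbx hb hω', G.cluster_ext_false e A ω'])
      have hEg := G.expec_split e (G.disconn A B) ((G.dropEdge e).disconn A (B ∪ {x}))
        ((G.dropEdge e).disconn A B) g (fun ω' => g (extCfg e false ω'))
        (fun ω' => g (extCfg e false ω')) hmt hmf hvtg (fun _ _ => rfl)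
      have hEx := G.expec_split e (G.disconn A B) ((G.dropEdge e).disconn A (B ∪ {x}))
        ((G.dropEdge e).disconn A B) (fun ω => f ω * g ω)
        (fun ω' => f (extCfg e false ω') * g (extCfg e false ω'))
        (fun ω' => f (extCfg e false ω') * g (extCfg e false ω')) hmt hmf
        (fun ω' hω' => by show f _ * g _ = _; rw [hvtf ω' hω', hvtg ω' hω'])
        (fun _ _ => rfl)
      have hGd : (G.dropEdge e).expec (((G.dropEdge e).disconn A (B ∪ {x})).indicator
              fun ω' => g (extCfg e false ω'))
            * (G.dropEdge e).prob ((G.dropEdge e).disconn A B)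
          ≤ (G.dropEdge e).expec (((G.dropEdge e).disconn A B).indicator
              fun ω' => g (extCfg e false ω'))
            * (G.dropEdge e).prob ((G.dropEdge e).disconn A (B ∪ {x})) := by
        have iha := (IH (n - 1) hlt _ hcard' V (G.dropEdge e) hp' A B
          (fun ω' => g (extCfg e false ω'))
          (fun ω' => if x ∈ (G.dropEdge e).cluster ω' A then (1 : ℝ) else 0)
          hg0inc hLinc hclg0).1 hclhL
        have Igh := ind_mul_h (G.dropEdge e) A B x (fun ω' => g (extCfg e false ω'))
        rw [Igh, Ih] at iha
        nlinarith [iha]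
      have ih1 := (IH (n - 1) hlt _ hcard' V (G.dropEdge e) hp' A (B ∪ {x})
        (fun ω' => f (extCfg e false ω')) (fun ω' => g (extCfg e false ω'))
        hf0inc hg0inc hclf0).1 hclg0
      have ih0 := (IH (n - 1) hlt _ hcard' V (G.dropEdge e) hp' A B
        (fun ω' => f (extCfg e false ω')) (fun ω' => g (extCfg e false ω'))
        hf0inc hg0inc hclf0).1 hclg0
      have hFGa : 0 ≤ ((G.dropEdge e).expec (((G.dropEdge e).disconn A (B ∪ {x})).indicator
              fun ω' => f (extCfg e false ω'))
            * (G.dropEdge e).prob ((G.dropEdge e).disconn A B)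
          - (G.dropEdge e).expec (((G.dropEdge e).disconn A B).indicator
              fun ω' => f (extCfg e false ω'))
            * (G.dropEdge e).prob ((G.dropEdge e).disconn A (B ∪ {x})))
          * ((G.dropEdge e).expec (((G.dropEdge e).disconn A (B ∪ {x})).indicator
              fun ω' => g (extCfg e false ω'))
            * (G.dropEdge e).prob ((G.dropEdge e).disconn A B)
          - (G.dropEdge e).expec (((G.dropEdge e).disconn A B).indicator
              fun ω' => g (extCfg e false ω'))
            * (G.dropEdge e).prob ((G.dropEdge e).disconn A (B ∪ {x}))) := by
        nlinarith [mul_nonneg (sub_nonneg.2 hFd) (sub_nonneg.2 hGd)]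
      have hcross := cross_ge hP0nn hP1nn ih1 ih0 hFGa
        (fun h => ⟨prob_zero_expec _ hp' _ h _, prob_zero_expec _ hp' _ h _,
          prob_zero_expec _ hp' _ h _⟩)
        (fun h => ⟨prob_zero_expec _ hp' _ h _, prob_zero_expec _ hp' _ h _,
          prob_zero_expec _ hp' _ h _⟩)
      rw [hEf, hEg, hEx, hEP]
      nlinarith [mul_le_mul_of_nonneg_left ih1 (mul_nonneg hpe0 hpe0),
        mul_le_mul_of_nonneg_left ih0 (mul_nonneg hqe0 hqe0),
        mul_le_mul_of_nonneg_left hcross (mul_nonneg hpe0 hqe0)]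
    · -- part (b) : negative correlation
      intro hgB
      have hclg0B : (G.dropEdge e).ClusterDetermined B (fun ω' => g (extCfg e false ω')) :=
        fun ω₁ ω₂ hcl => hgB _ _
          (by rw [G.cluster_ext_false e B ω₁, G.cluster_ext_false e B ω₂, hcl])
      have hclg1 : (G.dropEdge e).ClusterDetermined (B ∪ {x})
          (fun ω' => g (extCfg e true ω')) :=
        fun ω₁ ω₂ hcl => hgB _ _
          (by rw [G.cluster_ext_true_B e hbx hb ω₁, G.cluster_ext_true_B e hbx hb ω₂, hcl])
      have hEg := G.expec_split e (G.disconn A B) ((G.dropEdge e).disconn A (B ∪ {x}))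
        ((G.dropEdge e).disconn A B) g (fun ω' => g (extCfg e true ω'))
        (fun ω' => g (extCfg e false ω')) hmt hmf (fun _ _ => rfl) (fun _ _ => rfl)
      have hEx := G.expec_split e (G.disconn A B) ((G.dropEdge e).disconn A (B ∪ {x}))
        ((G.dropEdge e).disconn A B) (fun ω => f ω * g ω)
        (fun ω' => f (extCfg e false ω') * g (extCfg e true ω'))
        (fun ω' => f (extCfg e false ω') * g (extCfg e false ω')) hmt hmf
        (fun ω' hω' => by show f _ * g _ = _; rw [hvtf ω' hω'])
        (fun _ _ => rfl)
      have ih1 := (IH (n - 1) hlt _ hcard' V (G.dropEdge e) hp' A (B ∪ {x})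
        (fun ω' => f (extCfg e false ω')) (fun ω' => g (extCfg e true ω'))
        hf0inc hg1inc hclf0).2 hclg1
      have ih0 := (IH (n - 1) hlt _ hcard' V (G.dropEdge e) hp' A B
        (fun ω' => f (extCfg e false ω')) (fun ω' => g (extCfg e false ω'))
        hf0inc hg0inc hclf0).2 hclg0B
      have hmono : (G.dropEdge e).expec (((G.dropEdge e).disconn A (B ∪ {x})).indicator
              fun ω' => g (extCfg e false ω'))
          ≤ (G.dropEdge e).expec (((G.dropEdge e).disconn A (B ∪ {x})).indicator
              fun ω' => g (extCfg e true ω')) := by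
        rw [(G.dropEdge e).expec_ind, (G.dropEdge e).expec_ind]
        apply Finset.sum_le_sum
        intro ω' _
        by_cases h : ω' ∈ (G.dropEdge e).disconn A (B ∪ {x})
        · rw [Set.indicator_of_mem h, Set.indicator_of_mem h]
          exact mul_le_mul_of_nonneg_right
            (hg (hext false true (fun _ => rfl) ω' ω' (fun _ hh => hh)))
            ((G.dropEdge e).weight_nonneg hp' ω')
        · rw [Set.indicator_of_notMem h, Set.indicator_of_notMem h]
      have hGd' : (G.dropEdge e).expec (((G.dropEdge e).disconn A B).indicator
              fun ω' => g (extCfg e false ω'))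
            * (G.dropEdge e).prob ((G.dropEdge e).disconn A (B ∪ {x}))
          ≤ (G.dropEdge e).expec (((G.dropEdge e).disconn A (B ∪ {x})).indicator
              fun ω' => g (extCfg e true ω'))
            * (G.dropEdge e).prob ((G.dropEdge e).disconn A B) := by
        have ihh := (IH (n - 1) hlt _ hcard' V (G.dropEdge e) hp' A B
          (fun ω' => if x ∈ (G.dropEdge e).cluster ω' A then (1 : ℝ) else 0)
          (fun ω' => g (extCfg e false ω')) hLinc hg0inc hclhL).2 hclg0B
        have hcomm : ((G.dropEdge e).disconn A B).indicator
              (fun ω' => (if x ∈ (G.dropEdge e).cluster ω' A then (1 : ℝ) else 0)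
                * g (extCfg e false ω'))
            = ((G.dropEdge e).disconn A B).indicator
              (fun ω' => g (extCfg e false ω')
                * (if x ∈ (G.dropEdge e).cluster ω' A then (1 : ℝ) else 0)) :=
          congrArg _ (funext fun ω' => mul_comm _ _)
        rw [hcomm] at ihh
        have Igh := ind_mul_h (G.dropEdge e) A B x (fun ω' => g (extCfg e false ω'))
        rw [Igh, Ih] at ihh
        have hstep : (G.dropEdge e).expec (((G.dropEdge e).disconn A B).indicator
                fun ω' => g (extCfg e false ω'))
              * (G.dropEdge e).prob ((G.dropEdge e).disconn A (B ∪ {x}))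
            ≤ (G.dropEdge e).expec (((G.dropEdge e).disconn A (B ∪ {x})).indicator
                fun ω' => g (extCfg e false ω'))
              * (G.dropEdge e).prob ((G.dropEdge e).disconn A B) := by
          nlinarith [ihh]
        calc _ ≤ _ := hstep
          _ ≤ _ := mul_le_mul_of_nonneg_right hmono hP0nn
      have hFGb : ((G.dropEdge e).expec (((G.dropEdge e).disconn A (B ∪ {x})).indicator
              fun ω' => f (extCfg e false ω'))
            * (G.dropEdge e).prob ((G.dropEdge e).disconn A B)
          - (G.dropEdge e).expec (((G.dropEdge e).disconn A B).indicator
              fun ω' => f (extCfg e false ω'))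
            * (G.dropEdge e).prob ((G.dropEdge e).disconn A (B ∪ {x})))
          * ((G.dropEdge e).expec (((G.dropEdge e).disconn A (B ∪ {x})).indicator
              fun ω' => g (extCfg e true ω'))
            * (G.dropEdge e).prob ((G.dropEdge e).disconn A B)
          - (G.dropEdge e).expec (((G.dropEdge e).disconn A B).indicator
              fun ω' => g (extCfg e false ω'))
            * (G.dropEdge e).prob ((G.dropEdge e).disconn A (B ∪ {x}))) ≤ 0 :=
        mul_nonpos_iff.mpr (Or.inr ⟨by linarith, by linarith⟩)
      have hcross := cross_le hP0nn hP1nn ih1 ih0 hFGb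
        (fun h => ⟨prob_zero_expec _ hp' _ h _, prob_zero_expec _ hp' _ h _,
          prob_zero_expec _ hp' _ h _⟩)
        (fun h => ⟨prob_zero_expec _ hp' _ h _, prob_zero_expec _ hp' _ h _,
          prob_zero_expec _ hp' _ h _⟩)
      rw [hEf, hEg, hEx, hEP]
      nlinarith [mul_le_mul_of_nonneg_left ih1 (mul_nonneg hpe0 hpe0),
        mul_le_mul_of_nonneg_left ih0 (mul_nonneg hqe0 hqe0),
        mul_le_mul_of_nonneg_left hcross (mul_nonneg hpe0 hqe0)]
  · -- no edge is incident to B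
    by_cases hAB : ∃ a, a ∈ A ∧ a ∈ B
    · -- the event is empty
      have hD : G.disconn A B = ∅ := by
        obtain ⟨a, ha, hab⟩ := hAB
        ext ω
        simp only [Set.mem_empty_iff_false, iff_false]
        intro hω
        exact hω a ha a hab Relation.ReflTransGen.refl
      constructor <;> intro _ <;> rw [hD] <;>
        simp [expec, prob, Set.indicator_empty]
    · -- the event is everything
      have key : ∀ (ω : E → Bool) (a v : V), G.Conn ω a v → v ∈ B → a = v := by
        intro ω a v h
        induction h with
        | refl => intro _; rfl
        | tail hcon hadj ih =>
          intro hv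
          obtain ⟨e, _, hd⟩ := hadj
          refine absurd ?_ hBe
          refine ⟨e, ?_⟩
          rcases hd with h' | h'
          · right; rw [h']; exact hv
          · left; rw [h']; exact hv
      have hD : G.disconn A B = Set.univ := by
        ext ω
        simp only [Set.mem_univ, iff_true]
        intro a ha c hc hcon
        exact hAB ⟨a, ha, by rw [key ω a c hcon hc]; exact hc⟩
      constructor
      · intro _
        rw [hD]
        simp only [Set.indicator_univ]
        have hh := harris n E hcard V G hp f g hf hg
        unfold expec prob
        simpa [Set.indicator_univ] using hh
      · intro hgB
        have key2 : ∀ (ω : E → Bool) (c v : V), G.Conn ω c v → c ∈ B → c = v := by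
          intro ω c v h
          induction h with
          | refl => intro _; rfl
          | tail hcon hadj ih =>
            intro hc
            obtain ⟨e, _, hd⟩ := hadj
            obtain rfl := ih hc
            refine absurd ?_ hBe
            refine ⟨e, ?_⟩
            rcases hd with h' | h'
            · left; rw [h']; exact hc
            · right; rw [h']; exact hc
        have hclB : ∀ ω : E → Bool, G.cluster ω B = B := by
          intro ω
          ext v
          constructor
          · rintro ⟨c, hc, hcon⟩
            rw [← key2 ω c v hcon hc]; exact hc
          · intro hv
            exact ⟨v, hv, Relation.ReflTransGen.refl⟩
        have hgc : ∀ ω₁ ω₂ : E → Bool, g ω₁ = g ω₂ := fun ω₁ ω₂ =>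
          hgB ω₁ ω₂ (by rw [hclB, hclB])
        have h1 : G.expec ((G.disconn A B).indicator fun ω => f ω * g ω)
            = g (fun _ => false) * G.expec ((G.disconn A B).indicator f) := by
          unfold expec
          rw [Finset.mul_sum]
          apply Finset.sum_congr rfl
          intro ω _
          by_cases h : ω ∈ G.disconn A B
          · rw [Set.indicator_of_mem h, Set.indicator_of_mem h,
              hgc ω (fun _ => false)]
            ring
          · rw [Set.indicator_of_notMem h, Set.indicator_of_notMem h]
            ring
        have h2 : G.expec ((G.disconn A B).indicator g)
            = g (fun _ => false) * G.prob (G.disconn A B) := by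
          unfold expec prob
          rw [Finset.mul_sum]
          apply Finset.sum_congr rfl
          intro ω _
          by_cases h : ω ∈ G.disconn A B
          · rw [Set.indicator_of_mem h, Set.indicator_of_mem h,
              hgc ω (fun _ => false)]
          · rw [Set.indicator_of_notMem h, Set.indicator_of_notMem h]
            ring
        rw [h1, h2]
        exact le_of_eq (by ring)

end PercGraph
/-- the van den Berg–Häggström–Kahn inequality. -/
theorem vdBHK
    {V E : Type} [DecidableEq V] [Fintype E] [DecidableEq E]
    (G : PercGraph V E) (hp : G.ProbValid) (A B : Set V)
    (f g : (E → Bool) → ℝ)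
    (hf : PercGraph.IncreasingFun f) (hg : PercGraph.IncreasingFun g)
    (hfA : G.ClusterDetermined A f) :
    (G.ClusterDetermined A g →
      G.condExpec f (G.disconn A B) * G.condExpec g (G.disconn A B)
        ≤ G.condExpec (fun ω => f ω * g ω) (G.disconn A B)) ∧
    (G.ClusterDetermined B g →
      G.condExpec (fun ω => f ω * g ω) (G.disconn A B)
        ≤ G.condExpec f (G.disconn A B) * G.condExpec g (G.disconn A B)) := by
  have main := PercGraph.bhk_main (Fintype.card E) E rfl V G hp A B f g hf hg hfA
  have hPnn : 0 ≤ G.prob (G.disconn A B) := G.prob_nonneg hp _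
  constructor
  · intro hgA
    have H := main.1 hgA
    unfold PercGraph.condExpec
    rcases hPnn.eq_or_lt with h | h
    · rw [← h]
      simp
    · rw [div_mul_div_comm, div_le_div_iff₀ (by positivity) h]
      nlinarith [H, h.le]
  · intro hgB
    have H := main.2 hgB
    unfold PercGraph.condExpec
    rcases hPnn.eq_or_lt with h | h
    · rw [← h]
      simp
    · rw [div_mul_div_comm, div_le_div_iff₀ h (by positivity)]
      nlinarith [H, h.le]
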